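/- Let N ≥ 2 and let g, g̃ ∈ ℂ^N with all entries nonzero, and f, f̃ ∈ ℂ^N with f_0, f̃_0 real and positive and f_1 ≠ 0. Let T(f) denote the N×N Hermitian Toeplitz matrix whose (m,n) entry is f_{m-n} for m ≥ n and conj(f_{n-m}) for m < n. If diag(g̃) T(f̃) diag(conj(g̃)) = diag(g) T(f) diag(conj(g)), then there exist c₀ > 0 and c₁, c₂ ∈ ℝ such that g̃_n = c₀ e^{i(c₁ + n c₂)} g_n and f̃_n = c₀^{-2} e^{-i n c₂} f_n for all n = 0, …, N−1. -/

import Mathlib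

open Complex Matrix

/-- The Hermitian Toeplitz matrix generated by `f`. -/
noncomputable def ToepMat {N : ℕ} (f : Fin N → ℂ) : Matrix (Fin N) (Fin N) ℂ :=
  fun m n =>
    if h : (n : ℕ) ≤ (m : ℕ) then
      f ⟨(m : ℕ) - n, Nat.lt_of_le_of_lt (Nat.sub_le _ _) m.isLt⟩
    else
      starRingEnd ℂ (f ⟨(n : ℕ) - m, Nat.lt_of_le_of_lt (Nat.sub_le _ _) n.isLt⟩)

theorem stmt0 {N : ℕ} (hN : 2 ≤ N)
    (g gt f ft : Fin N → ℂ)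
    (hg : ∀ n, g n ≠ 0) (hgt : ∀ n, gt n ≠ 0)
    (hf0 : (f ⟨0, by omega⟩).im = 0) (hf0pos : 0 < (f ⟨0, by omega⟩).re)
    (hft0 : (ft ⟨0, by omega⟩).im = 0) (hft0pos : 0 < (ft ⟨0, by omega⟩).re)
    (hf1 : f ⟨1, by omega⟩ ≠ 0)
    (heq : Matrix.diagonal gt * ToepMat ft * Matrix.diagonal (fun n => starRingEnd ℂ (gt n)) =
      Matrix.diagonal g * ToepMat f * Matrix.diagonal (fun n => starRingEnd ℂ (g n))) :
    ∃ c₀ : ℝ, 0 < c₀ ∧ ∃ c₁ c₂ : ℝ, ∀ n : Fin N,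
      gt n = (c₀ : ℂ) * Complex.exp (Complex.I * (c₁ + (n : ℕ) * c₂)) * g n ∧
      ft n = (c₀ : ℂ)⁻¹ ^ 2 * Complex.exp (-(Complex.I * ((n : ℕ) * c₂))) * f n := by
  have hN0 : 0 < N := by omega
  have hN1 : 1 < N := by omega
  have hgc : ∀ n : Fin N, starRingEnd ℂ (g n) ≠ 0 := fun n => by simpa using hg n
  -- entrywise equality
  have hE : ∀ m n : Fin N, gt m * ToepMat ft m n * starRingEnd ℂ (gt n)
      = g m * ToepMat f m n * starRingEnd ℂ (g n) := by
    intro m n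
    have := congrFun (congrFun heq m) n
    simpa [Matrix.mul_diagonal, Matrix.diagonal_mul, mul_assoc] using this
  -- Toeplitz entries
  have hTdiag : ∀ (v : Fin N → ℂ) (n : Fin N), ToepMat v n n = v ⟨0, hN0⟩ := by
    intro v n
    simp only [ToepMat, le_refl, dif_pos]
    congr 1
    exact Fin.ext (Nat.sub_self _)
  have hT0 : ∀ (v : Fin N → ℂ) (m : Fin N), ToepMat v m ⟨0, hN0⟩ = v m := by
    intro v m
    simp only [ToepMat]
    rw [dif_pos (Nat.zero_le _)]
    congr 1
  have hT1 : ∀ (v : Fin N → ℂ) (k : ℕ) (hk : k + 1 < N),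
      ToepMat v ⟨k+1, hk⟩ ⟨k, by omega⟩ = v ⟨1, hN1⟩ := by
    intro v k hk
    simp only [ToepMat]
    rw [dif_pos (by simp)]
    congr 1
    exact Fin.ext (by simp)
  set h : Fin N → ℂ := fun n => gt n / g n with hh
  have hhne : ∀ n, h n ≠ 0 := fun n => div_ne_zero (hgt n) (hg n)
  -- diagonal relation
  have hAn : ∀ n : Fin N, Complex.normSq (gt n) * (ft ⟨0, hN0⟩).re
      = Complex.normSq (g n) * (f ⟨0, hN0⟩).re := by
    intro n
    have e := hE n n
    rw [hTdiag, hTdiag] at e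
    have hf0c : f ⟨0, hN0⟩ = ((f ⟨0, hN0⟩).re : ℂ) := by
      exact Complex.ext rfl (by simpa using hf0)
    have hft0c : ft ⟨0, hN0⟩ = ((ft ⟨0, hN0⟩).re : ℂ) := by
      exact Complex.ext rfl (by simpa using hft0)
    have e2 : (Complex.normSq (gt n) : ℂ) * ((ft ⟨0, hN0⟩).re : ℂ)
        = (Complex.normSq (g n) : ℂ) * ((f ⟨0, hN0⟩).re : ℂ) := by
      rw [← Complex.mul_conj, ← Complex.mul_conj]
      rw [hf0c, hft0c] at e
      linear_combination e
    exact_mod_cast e2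
  set r : ℝ := (f ⟨0, hN0⟩).re / (ft ⟨0, hN0⟩).re with hr
  have hrpos : 0 < r := div_pos hf0pos hft0pos
  have hnsqg : ∀ n, Complex.normSq (g n) ≠ 0 := fun n => (Complex.normSq_pos.mpr (hg n)).ne'
  have hnormh : ∀ n, Complex.normSq (h n) = r := by
    intro n
    rw [hh]
    simp only [map_div₀]
    rw [hr]
    rw [div_eq_div_iff (hnsqg n) (ne_of_gt hft0pos)]
    linear_combination hAn n
  set c₀ : ℝ := Real.sqrt r with hc0
  have hc0pos : 0 < c₀ := Real.sqrt_pos.mpr hrpos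
  have hc0sq : c₀ ^ 2 = r := Real.sq_sqrt hrpos.le
  have habsh : ∀ n, ‖h n‖ = c₀ := by
    intro n
    rw [Complex.norm_def, hnormh n, hc0]
  -- step relation
  have hstep : ∀ (k : ℕ) (hk : k + 1 < N),
      h ⟨k+1, hk⟩ * starRingEnd ℂ (h ⟨k, by omega⟩) * ft ⟨1, hN1⟩ = f ⟨1, hN1⟩ := by
    intro k hk
    have e := hE ⟨k+1, hk⟩ ⟨k, by omega⟩
    rw [hT1, hT1] at e
    rw [hh]
    simp only [map_div₀]
    rw [div_mul_div_comm, div_mul_eq_mul_div, div_eq_iff (mul_ne_zero (hg _) (hgc _))]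
    linear_combination e
  have hft1 : ft ⟨1, hN1⟩ ≠ 0 := by
    intro h0
    have := hstep 0 hN1
    rw [h0, mul_zero] at this
    exact hf1 this.symm
  set w : ℂ := f ⟨1, hN1⟩ / ft ⟨1, hN1⟩ with hwdef
  have hwstep : ∀ (k : ℕ) (hk : k + 1 < N),
      h ⟨k+1, hk⟩ * starRingEnd ℂ (h ⟨k, by omega⟩) = w := by
    intro k hk
    rw [hwdef, eq_div_iff hft1]
    exact hstep k hk
  have habsw : ‖w‖ = c₀ ^ 2 := by
    have := hwstep 0 hN1
    rw [← this, norm_mul, Complex.norm_conj, habsh, habsh]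
    ring
  set c₂ : ℝ := w.arg with hc2
  have hwval : w = (c₀ : ℂ) ^ 2 * Complex.exp (Complex.I * c₂) := by
    have := Complex.norm_mul_exp_arg_mul_I w
    rw [habsw] at this
    rw [← this, mul_comm Complex.I _]
    push_cast
    ring
  set c₁ : ℝ := (h ⟨0, hN0⟩).arg with hc1
  have hh0 : h ⟨0, hN0⟩ = (c₀ : ℂ) * Complex.exp (Complex.I * c₁) := by
    have := Complex.norm_mul_exp_arg_mul_I (h ⟨0, hN0⟩)
    rw [habsh] at this
    rw [← this, mul_comm Complex.I _]
  -- conjugation helper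
  have hconj : ∀ x : ℝ, starRingEnd ℂ ((c₀ : ℂ) * Complex.exp (Complex.I * x))
      = (c₀ : ℂ) * Complex.exp (-(Complex.I * x)) := by
    intro x
    rw [_root_.map_mul, Complex.conj_ofReal, ← Complex.exp_conj, _root_.map_mul,
      Complex.conj_I, Complex.conj_ofReal]
    ring_nf
  -- main induction
  have key : ∀ (k : ℕ) (hk : k < N),
      h ⟨k, hk⟩ = (c₀ : ℂ) * Complex.exp (Complex.I * (c₁ + (k : ℕ) * c₂)) := by
    intro k
    induction k with
    | zero =>
      intro hk
      rw [hh0]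
      norm_num
    | succ k ih =>
      intro hk
      have hkN : k < N := by omega
      have e := hwstep k hk
      rw [ih hkN] at e
      have hxr : ((c₁ : ℂ) + (k : ℕ) * c₂) = ((c₁ + (k : ℕ) * c₂ : ℝ) : ℂ) := by push_cast; ring
      rw [hxr, hconj, hwval] at e
      have hne : (c₀ : ℂ) * Complex.exp (-(Complex.I * ((c₁ + (k : ℕ) * c₂ : ℝ) : ℂ))) ≠ 0 :=
        mul_ne_zero (by exact_mod_cast hc0pos.ne') (Complex.exp_ne_zero _)
      apply mul_right_cancel₀ hne
      rw [e]
      have hAB : Complex.exp (Complex.I * ((c₁ : ℂ) + ((k + 1 : ℕ) : ℂ) * (c₂ : ℂ)))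
          * Complex.exp (-(Complex.I * ((c₁ + (k : ℕ) * c₂ : ℝ) : ℂ)))
          = Complex.exp (Complex.I * (c₂ : ℂ)) := by
        rw [← Complex.exp_add]
        congr 1
        push_cast
        ring
      linear_combination (-((c₀ : ℂ) * (c₀ : ℂ))) * hAB
  -- column-0 relation
  have hrow : ∀ n : Fin N, h n * starRingEnd ℂ (h ⟨0, hN0⟩) * ft n = f n := by
    intro n
    have e := hE n ⟨0, hN0⟩
    rw [hT0, hT0] at e
    rw [hh]
    simp only [map_div₀]
    rw [div_mul_div_comm, div_mul_eq_mul_div, div_eq_iff (mul_ne_zero (hg _) (hgc _))]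
    linear_combination e
  have hc0ne : (c₀ : ℂ) ≠ 0 := by exact_mod_cast hc0pos.ne'
  refine ⟨c₀, hc0pos, c₁, c₂, fun n => ?_⟩
  have hkey := key n.val n.isLt
  rw [Fin.eta] at hkey
  constructor
  · rw [← hkey, hh]
    simp only
    rw [div_mul_cancel₀ _ (hg n)]
  · have e := hrow n
    rw [hkey, hh0, hconj] at e
    have hX : (c₀ : ℂ) * Complex.exp (Complex.I * ((c₁ : ℂ) + ((n : ℕ) : ℂ) * (c₂ : ℂ)))
        * ((c₀ : ℂ) * Complex.exp (-(Complex.I * (c₁ : ℂ))))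
        = (c₀ : ℂ) ^ 2 * Complex.exp (Complex.I * (((n : ℕ) : ℂ) * (c₂ : ℂ))) := by
      rw [mul_mul_mul_comm, ← Complex.exp_add]
      congr 1
      · ring
      · congr 1
        ring
    rw [hX] at e
    rw [← e, Complex.exp_neg]
    field_simp
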